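/- Assume additionally that V̄₀ is the closure of an open set V₀ ⊆ ℝⁿ with V₀ ≠ ℝⁿ, and that V₀ is a John domain with center x₀ ∈ V₀ and constant κ₀ ∈ (0,1] (for every y ∈ V₀ there exist ℓ ≥ 0 and a 1-Lipschitz curve γ : [0,ℓ] → V₀ with γ(0) = y, γ(ℓ) = x₀, and dist(γ(s), ℝⁿ ∖ V₀) ≥ κ₀ s for all s). Then for every t > 0 the sublevel set { x ∈ Ω̄ : v(x) < t } is contained in the closed ball of center x₀ and radius t/σ_* + dist(x₀, ℝⁿ ∖ V₀)/κ₀. -/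

import Mathlib

open Set Metric MeasureTheory

noncomputable section

abbrev Euc (n : ℕ) := EuclideanSpace ℝ (Fin n)

/-- An admissible curve for the point `x`: a Lipschitz curve `γ : [0,1] → ℝⁿ` with values
in `Ω̄`, starting in `V̄₀` and ending at `x`. -/
def IsAdmissible {n : ℕ} (Ω V₀ : Set (Euc n)) (x : Euc n) (γ : ℝ → Euc n) : Prop :=
  (∃ K : NNReal, LipschitzWith K γ) ∧ (∀ s ∈ Icc (0:ℝ) 1, γ s ∈ Ω) ∧ γ 0 ∈ V₀ ∧ γ 1 = x

/-- The cost of a curve: `∫₀¹ σ(γ(s), γ′(s)) ds`. -/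
def curveCost {n : ℕ} (σ : Euc n → Euc n → ℝ) (γ : ℝ → Euc n) : ℝ :=
  ∫ s in (0:ℝ)..1, σ (γ s) (deriv γ s)

/-- The time-of-attachment function: infimum of costs over admissible curves. -/
def timeOfAttachment {n : ℕ} (Ω V₀ : Set (Euc n)) (σ : Euc n → Euc n → ℝ) (x : Euc n) : ℝ :=
  sInf (curveCost σ '' {γ : ℝ → Euc n | IsAdmissible Ω V₀ x γ})

/-- The geodesic distance on `Ω̄`. -/
def geodDist {n : ℕ} (Ω : Set (Euc n)) (x y : Euc n) : ℝ :=
  sInf {L : ℝ | ∃ γ : ℝ → Euc n, (∃ K : NNReal, LipschitzWith K γ) ∧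
    (∀ s ∈ Icc (0:ℝ) 1, γ s ∈ Ω) ∧ γ 0 = y ∧ γ 1 = x ∧
    L = ∫ s in (0:ℝ)..1, ‖deriv γ s‖}



/-- Norm of the (junk-extended) derivative of a Lipschitz map is bounded by the constant. -/
lemma myNormDerivLe {E : Type*} [NormedAddCommGroup E] [NormedSpace ℝ E]
    {K : NNReal} {γ : ℝ → E} (h : LipschitzWith K γ) (s : ℝ) : ‖deriv γ s‖ ≤ K := by
  have h1 : deriv γ s = fderiv ℝ γ s 1 := rfl
  rw [h1]
  calc ‖fderiv ℝ γ s 1‖ ≤ ‖fderiv ℝ γ s‖ * ‖(1:ℝ)‖ := (fderiv ℝ γ s).le_opNorm 1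
  _ ≤ K := by simpa using norm_fderiv_le_of_lipschitz ℝ h

/-- For a continuous monotone function, the integral of the derivative is at most the
increment (FTC upper bound for monotone functions). -/
lemma integral_deriv_le_of_monotone {g : ℝ → ℝ} (hg : Monotone g) (hc : Continuous g) :
    ∫ s in (0:ℝ)..1, deriv g s ≤ g 1 - g 0 := by
  set S : StieltjesFunction ℝ := ⟨g, hg, fun x => (hc.continuousAt).continuousWithinAt⟩ with hS
  have hae : ∀ᵐ x, deriv g x = (S.measure.rnDeriv volume x).toReal := by
    filter_upwards [S.ae_hasDerivAt] with x hx using hx.deriv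
  rw [intervalIntegral.integral_of_le zero_le_one]
  have h1 : ∫ x in Ioc (0:ℝ) 1, deriv g x =
      ∫ x in Ioc (0:ℝ) 1, (S.measure.rnDeriv volume x).toReal :=
    integral_congr_ae (ae_restrict_of_ae hae)
  rw [h1, integral_toReal
    ((Measure.measurable_rnDeriv S.measure volume).aemeasurable)
    (ae_restrict_of_ae (Measure.rnDeriv_lt_top _ _))]
  have h3 : S.measure (Ioc (0:ℝ) 1) = ENNReal.ofReal (g 1 - g 0) := S.measure_Ioc 0 1
  calc (∫⁻ x in Ioc (0:ℝ) 1, S.measure.rnDeriv volume x).toReal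
      ≤ (S.measure (Ioc (0:ℝ) 1)).toReal := by
        apply ENNReal.toReal_mono
        · rw [h3]; exact ENNReal.ofReal_ne_top
        · exact Measure.setLIntegral_rnDeriv_le _
  _ = g 1 - g 0 := by
        rw [h3, ENNReal.toReal_ofReal (sub_nonneg.2 (hg zero_le_one))]

/-- FTC lower bound for real Lipschitz functions. -/
lemma sub_le_integral_deriv_of_lipschitz {f : ℝ → ℝ} {K : NNReal} (hf : LipschitzWith K f) :
    f 1 - f 0 ≤ ∫ s in (0:ℝ)..1, deriv f s := by
  set g : ℝ → ℝ := fun s => (K:ℝ) * s - f s with hg_def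
  have hgmono : Monotone g := by
    intro a b hab
    have h := hf.dist_le_mul b a
    rw [Real.dist_eq, Real.dist_eq] at h
    have h2 := (le_abs_self (f b - f a)).trans h
    rw [abs_of_nonneg (sub_nonneg.2 hab)] at h2
    simp only [hg_def]
    nlinarith
  have hgcont : Continuous g := (continuous_const.mul continuous_id).sub hf.continuous
  have haed : ∀ᵐ x, DifferentiableAt ℝ f x := hf.ae_differentiableAt (μ := volume)
  have hae : ∀ᵐ x, deriv g x = (K:ℝ) - deriv f x := by
    filter_upwards [haed] with x hx
    have hd1 : HasDerivAt (fun s : ℝ => (K:ℝ) * s) (K:ℝ) x := by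
      simpa using (hasDerivAt_id x).const_mul (K:ℝ)
    exact (hd1.sub hx.hasDerivAt).deriv
  have hint : IntervalIntegrable (deriv f) volume 0 1 := by
    apply IntervalIntegrable.mono_fun' (g := fun _ => (K:ℝ)) intervalIntegrable_const
    · exact (measurable_deriv f).aestronglyMeasurable.restrict
    · exact ae_of_all _ fun x => myNormDerivLe hf x
  have hA := integral_deriv_le_of_monotone hgmono hgcont
  have hcongr : ∫ s in (0:ℝ)..1, deriv g s = ∫ s in (0:ℝ)..1, ((K:ℝ) - deriv f s) :=
    intervalIntegral.integral_congr_ae (by filter_upwards [hae] with x hx _ using hx)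
  rw [hcongr, intervalIntegral.integral_sub intervalIntegrable_const hint,
    intervalIntegral.integral_const] at hA
  simp only [hg_def] at hA
  have : (1 - 0 : ℝ) • (K:ℝ) = (K:ℝ) := by norm_num
  rw [this] at hA
  linarith

/-- FTC lower bound for Euclidean-valued Lipschitz curves. -/
lemma norm_sub_le_integral_norm_deriv {n : ℕ} {γ : ℝ → EuclideanSpace ℝ (Fin n)} {K : NNReal}
    (h : LipschitzWith K γ) : ‖γ 1 - γ 0‖ ≤ ∫ s in (0:ℝ)..1, ‖deriv γ s‖ := by
  have hnonneg : (0:ℝ) ≤ ∫ s in (0:ℝ)..1, ‖deriv γ s‖ :=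
    intervalIntegral.integral_nonneg zero_le_one (fun s _ => norm_nonneg _)
  rcases eq_or_ne (γ 1) (γ 0) with he | he
  · rw [he]; simpa using hnonneg
  set w := γ 1 - γ 0 with hw
  have hwne : w ≠ 0 := sub_ne_zero.2 he
  have hwpos : (0:ℝ) < ‖w‖ := norm_pos_iff.2 hwne
  set u := ‖w‖⁻¹ • w with hu_def
  have hu : ‖u‖ = 1 := by
    rw [hu_def, norm_smul, norm_inv, norm_norm, inv_mul_cancel₀ hwpos.ne']
  set f : ℝ → ℝ := fun s => inner ℝ u (γ s) with hf_def
  have hf : LipschitzWith K f := by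
    apply LipschitzWith.of_dist_le_mul
    intro a b
    rw [Real.dist_eq]
    have h1 : f a - f b = inner ℝ u (γ a - γ b) := by simp [hf_def, inner_sub_right]
    rw [h1]
    calc |inner ℝ u (γ a - γ b)| ≤ ‖u‖ * ‖γ a - γ b‖ := abs_real_inner_le_norm _ _
    _ = dist (γ a) (γ b) := by rw [hu, one_mul, dist_eq_norm]
    _ ≤ K * dist a b := h.dist_le_mul a b
  have key := sub_le_integral_deriv_of_lipschitz hf
  have hstart : f 1 - f 0 = ‖w‖ := by
    have h1 : f 1 - f 0 = inner ℝ u w := by simp [hf_def, inner_sub_right, hw]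
    rw [h1, hu_def, real_inner_smul_left, real_inner_self_eq_norm_mul_norm]
    field_simp
  have hmono : ∫ s in (0:ℝ)..1, deriv f s ≤ ∫ s in (0:ℝ)..1, ‖deriv γ s‖ := by
    have hintf : IntervalIntegrable (deriv f) volume 0 1 := by
      apply IntervalIntegrable.mono_fun' (g := fun _ => (K:ℝ)) intervalIntegrable_const
      · exact (measurable_deriv f).aestronglyMeasurable.restrict
      · exact ae_of_all _ fun x => myNormDerivLe hf x
    have hintg : IntervalIntegrable (fun s => ‖deriv γ s‖) volume 0 1 := by
      apply IntervalIntegrable.mono_fun' (g := fun _ => (K:ℝ)) intervalIntegrable_const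
      · exact (measurable_deriv γ).norm.aestronglyMeasurable.restrict
      · exact ae_of_all _ fun x => by
          simpa [Real.norm_eq_abs, abs_of_nonneg (norm_nonneg _)] using
            myNormDerivLe h x
    apply intervalIntegral.integral_mono_ae zero_le_one hintf hintg
    filter_upwards [h.ae_differentiableAt (μ := volume)] with x hx
    have hder : HasDerivAt f (inner ℝ u (deriv γ x)) x := by
      have := (innerSL ℝ u).hasFDerivAt.comp_hasDerivAt x hx.hasDerivAt
      exact this
    rw [hder.deriv]
    calc inner ℝ u (deriv γ x) ≤ ‖u‖ * ‖deriv γ x‖ := real_inner_le_norm _ _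
    _ = ‖deriv γ x‖ := by rw [hu, one_mul]
  calc ‖w‖ = f 1 - f 0 := hstart.symm
  _ ≤ ∫ s in (0:ℝ)..1, deriv f s := key
  _ ≤ _ := hmono

/-- If V̄₀ is the closure of an open John domain V₀ with center x₀ and
constant κ₀, then for every t > 0 the sublevel set {v < t} is contained in the closed
ball of center x₀ and radius t/σ_* + dist(x₀, ℝⁿ∖V₀)/κ₀. -/
theorem sublevel_sets_bounded
    {n : ℕ} (hn : 1 ≤ n)
    (Ω V₀ : Set (Euc n)) (hΩne : Ω.Nonempty) (hΩcl : IsClosed Ω)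
    (hV₀ne : V₀.Nonempty) (hV₀cl : IsClosed V₀) (hV₀sub : V₀ ⊆ Ω)
    (σl σu : ℝ) (hσl : 0 < σl) (hσlu : σl ≤ σu)
    (σ : Euc n → Euc n → ℝ)
    (hσcont : ContinuousOn (fun p : Euc n × Euc n => σ p.1 p.2) (Ω ×ˢ (univ : Set (Euc n))))
    (hσbound : ∀ x ∈ Ω, ∀ q : Euc n, σl * ‖q‖ ≤ σ x q ∧ σ x q ≤ σu * ‖q‖)
    (hadm : ∀ x ∈ Ω, ∃ γ : ℝ → Euc n, IsAdmissible Ω V₀ x γ)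
    (v : Euc n → ℝ) (hvnonneg : ∀ x ∈ Ω, 0 ≤ v x)
    (hv : ∀ x ∈ Ω, v x = timeOfAttachment Ω V₀ σ x)
    (V₀' : Set (Euc n)) (hV₀'open : IsOpen V₀') (hV₀'ne : V₀' ≠ (univ : Set (Euc n)))
    (hclos : V₀ = closure V₀')
    (x₀ : Euc n) (hx₀ : x₀ ∈ V₀') (κ₀ : ℝ) (hκ₀ : κ₀ ∈ Ioc (0:ℝ) 1)
    (hjohn : ∀ y ∈ V₀', ∃ ℓ : ℝ, 0 ≤ ℓ ∧ ∃ γ : ℝ → Euc n,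
      LipschitzOnWith 1 γ (Icc 0 ℓ) ∧ (∀ s ∈ Icc (0:ℝ) ℓ, γ s ∈ V₀') ∧
      γ 0 = y ∧ γ ℓ = x₀ ∧ ∀ s ∈ Icc (0:ℝ) ℓ, κ₀ * s ≤ infDist (γ s) V₀'ᶜ) :
    ∀ t : ℝ, 0 < t →
      {x ∈ Ω | v x < t} ⊆ closedBall x₀ (t / σl + infDist x₀ V₀'ᶜ / κ₀) := by
  intro t ht x hx
  obtain ⟨hxΩ, hxv⟩ := hx
  set D : ℝ := infDist x₀ V₀'ᶜ / κ₀ with hD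
  have hκ : 0 < κ₀ := hκ₀.1
  have hDnn : 0 ≤ D := div_nonneg infDist_nonneg hκ.le
  -- every point of V₀ is within distance D of x₀
  have hball : ∀ y ∈ V₀, dist y x₀ ≤ D := by
    have hsub : V₀' ⊆ {y | dist y x₀ ≤ D} := by
      intro y hy
      obtain ⟨ℓ, hℓ, γ, hlip, hmem, h0, hℓx, hJ⟩ := hjohn y hy
      have h1 : κ₀ * ℓ ≤ infDist x₀ V₀'ᶜ := by
        have := hJ ℓ ⟨hℓ, le_refl ℓ⟩
        rwa [hℓx] at this
      have h2 : ℓ ≤ D := by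
        rw [hD, le_div_iff₀ hκ]
        linarith
      have h3 : dist y x₀ ≤ ℓ := by
        have := hlip.dist_le_mul 0 ⟨le_refl 0, hℓ⟩ ℓ ⟨hℓ, le_refl ℓ⟩
        rw [h0, hℓx] at this
        simpa [Real.dist_eq, abs_of_nonneg hℓ] using this
      exact h3.trans h2
    have hcl : IsClosed {y : Euc n | dist y x₀ ≤ D} :=
      isClosed_le (continuous_id.dist continuous_const) continuous_const
    intro y hy
    rw [hclos] at hy
    exact closure_minimal hsub hcl hy
  -- lower bound for all curve costs
  have hlb : ∀ c ∈ curveCost σ '' {γ : ℝ → Euc n | IsAdmissible Ω V₀ x γ},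
      σl * (dist x x₀ - D) ≤ c := by
    rintro c ⟨γ, hγ, rfl⟩
    obtain ⟨⟨K, hK⟩, hmemΩ, h0, h1⟩ := hγ
    set π : ℝ → ℝ := fun s => max 0 (min s 1) with hπ
    have hπmem : ∀ s, π s ∈ Icc (0:ℝ) 1 := fun s =>
      ⟨le_max_left _ _, max_le zero_le_one (min_le_right _ _)⟩
    have hπcont : Continuous π := continuous_const.max (continuous_id.min continuous_const)
    set F : ℝ → ℝ := fun s => σ (γ (π s)) (deriv γ s) with hF
    -- measurability of F
    have hFm : Measurable F := by
      have hT : Measurable (fun s => (⟨(γ (π s), deriv γ s),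
          ⟨hmemΩ (π s) (hπmem s), mem_univ _⟩⟩ : ↥(Ω ×ˢ (univ : Set (Euc n))))) :=
        Measurable.subtype_mk
          (((hK.continuous.comp hπcont).measurable).prodMk (measurable_deriv γ))
      have hσr : Continuous ((Ω ×ˢ (univ : Set (Euc n))).restrict
          (fun p : Euc n × Euc n => σ p.1 p.2)) :=
        continuousOn_iff_continuous_restrict.mp hσcont
      exact hσr.measurable.comp hT
    have hFbound : ∀ s, ‖F s‖ ≤ σu * K := by
      intro s
      obtain ⟨hb1, hb2⟩ := hσbound (γ (π s)) (hmemΩ (π s) (hπmem s)) (deriv γ s)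
      have hpos : 0 ≤ F s := le_trans (by positivity) hb1
      rw [Real.norm_eq_abs, abs_of_nonneg hpos]
      refine hb2.trans ?_
      have := myNormDerivLe hK s
      nlinarith [norm_nonneg (deriv γ s), hσl.le.trans hσlu]
    have hFint : IntervalIntegrable F volume 0 1 := by
      apply IntervalIntegrable.mono_fun' (g := fun _ => σu * K) intervalIntegrable_const
        hFm.aestronglyMeasurable.restrict
      exact ae_of_all _ hFbound
    have hNint : IntervalIntegrable (fun s => σl * ‖deriv γ s‖) volume 0 1 := by
      apply IntervalIntegrable.const_mul
      apply IntervalIntegrable.mono_fun' (g := fun _ => (K:ℝ)) intervalIntegrable_const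
        (measurable_deriv γ).norm.aestronglyMeasurable.restrict
      exact ae_of_all _ fun s => by
        simpa [Real.norm_eq_abs, abs_of_nonneg (norm_nonneg _)] using myNormDerivLe hK s
    have hcostF : curveCost σ γ = ∫ s in (0:ℝ)..1, F s := by
      apply intervalIntegral.integral_congr
      intro s hs
      rw [uIcc_of_le zero_le_one] at hs
      have : π s = s := by
        rw [hπ]
        simp only [min_eq_left hs.2, max_eq_right hs.1]
      simp [hF, this]
    have hstep2 : ∫ s in (0:ℝ)..1, σl * ‖deriv γ s‖ ≤ ∫ s in (0:ℝ)..1, F s := by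
      apply intervalIntegral.integral_mono_on zero_le_one hNint hFint
      intro s hs
      have : π s = s := by
        rw [hπ]
        simp only [min_eq_left hs.2, max_eq_right hs.1]
      rw [hF]
      simp only [this]
      exact (hσbound (γ s) (hmemΩ s hs) (deriv γ s)).1
    have hstep3 : σl * ‖γ 1 - γ 0‖ ≤ ∫ s in (0:ℝ)..1, σl * ‖deriv γ s‖ := by
      rw [intervalIntegral.integral_const_mul]
      exact mul_le_mul_of_nonneg_left (norm_sub_le_integral_norm_deriv hK) hσl.le
    have hstep4 : dist x x₀ - D ≤ ‖γ 1 - γ 0‖ := by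
      have hd : ‖γ 1 - γ 0‖ = dist x (γ 0) := by rw [h1, dist_eq_norm]
      have := dist_triangle x (γ 0) x₀
      have hb := hball (γ 0) h0
      rw [hd]
      linarith
    calc σl * (dist x x₀ - D) ≤ σl * ‖γ 1 - γ 0‖ :=
          mul_le_mul_of_nonneg_left hstep4 hσl.le
    _ ≤ ∫ s in (0:ℝ)..1, σl * ‖deriv γ s‖ := hstep3
    _ ≤ ∫ s in (0:ℝ)..1, F s := hstep2
    _ = curveCost σ γ := hcostF.symm
  have hS : (curveCost σ '' {γ : ℝ → Euc n | IsAdmissible Ω V₀ x γ}).Nonempty := by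
    obtain ⟨γ, hγ⟩ := hadm x hxΩ
    exact ⟨curveCost σ γ, mem_image_of_mem _ hγ⟩
  have hlow : σl * (dist x x₀ - D) ≤ v x := by
    rw [hv x hxΩ]
    exact le_csInf hS hlb
  have hfin : σl * (dist x x₀ - D) < t := lt_of_le_of_lt hlow hxv
  have : dist x x₀ - D < t / σl := by
    rw [lt_div_iff₀ hσl]
    linarith [mul_comm σl (dist x x₀ - D)]
  exact mem_closedBall.2 (by linarith)
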